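/- (Sub-potential lower bound from two-sided kernel estimates.) Let N ≥ 1, C ≥ 1, T > 0. Let Γ(x, t; y, s) be defined for x, y ∈ ℝ^N and 0 ≤ s < t < T, measurable, and satisfying the two-sided Gaussian bounds (1/C)·(t − s)^{−N/2}·exp(−C‖x − y‖²/(t − s)) ≤ Γ(x, t; y, s) ≤ C·(t − s)^{−N/2}·exp(−(1/C)‖x − y‖²/(t − s)). Let u : ℝ^N × [0, T) → [0, ∞) be measurable and satisfy the representation formula u(x, t) = ∫_{ℝ^N} Γ(x, t; ξ, τ)·u(ξ, τ) dξ for all 0 ≤ τ < t < T and x ∈ ℝ^N (the integrals being finite). Then there exists a constant C' > 1, depending only on N and C, such that u(x, t) ≥ (1/C')·u(y, s)·(s/t)^{N/2}·exp(−C'‖x − y‖²/(t − s)) for all x, y ∈ ℝ^N and all 0 < s < t < T. -/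

import Mathlib

open MeasureTheory Real

/-- Sub-potential lower bound from two-sided Gaussian kernel estimates: if a nonnegative
function is represented by a kernel `Γ` satisfying two-sided Gaussian bounds, then it
satisfies a global Harnack-type lower bound, with a constant depending only on `N` and `C`. -/

private lemma aux_ratio1 (C s t : ℝ) (hC : 1 ≤ C) (hs : 0 < s) (hst : s < t) :
    s * (t - s + s / 2) ≤ s / 2 * (4 * C ^ 2 * t) := by
  have hC2 : (1:ℝ) ≤ C ^ 2 := by nlinarith
  have h1 : s * t ≤ C ^ 2 * (s * t) := by
    nlinarith [mul_pos hs (hs.trans hst)]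
  nlinarith [mul_pos hs hs, mul_pos hs (hs.trans hst)]

private lemma aux_ratio2 (C s t δ : ℝ) (hC : 1 ≤ C) (hs : 0 < s) (hst : s < t)
    (hδ : 0 < δ) : s * (2 * C ^ 2 * δ + δ) ≤ δ * (4 * C ^ 2 * t) := by
  have hC2 : (1:ℝ) ≤ C ^ 2 := by nlinarith
  have h1 : s * δ ≤ t * δ := by nlinarith
  have h2 : C ^ 2 * (s * δ) ≤ C ^ 2 * (t * δ) := by nlinarith [mul_pos hδ hs]
  nlinarith [mul_pos hδ (hs.trans hst)]

private lemma aux_sq_triangle (a b c : ℝ) (h : a ≤ b + c) (ha : 0 ≤ a) :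
    a ^ 2 ≤ 2 * b ^ 2 + 2 * c ^ 2 := by
  nlinarith [sq_nonneg (b - c), sq_nonneg (b + c)]

set_option maxHeartbeats 1000000 in
theorem subpotential_lower_bound (N : ℕ) (hN : 1 ≤ N) (C : ℝ) (hC : 1 ≤ C) :
    ∃ C' : ℝ, 1 < C' ∧
      ∀ T : ℝ, 0 < T →
      ∀ Γ : EuclideanSpace ℝ (Fin N) → ℝ → EuclideanSpace ℝ (Fin N) → ℝ → ℝ,
      ∀ u : EuclideanSpace ℝ (Fin N) → ℝ → ℝ,
        -- measurability of the kernel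
        (∀ t s : ℝ, 0 ≤ s → s < t → t < T →
          Measurable (fun q : EuclideanSpace ℝ (Fin N) × EuclideanSpace ℝ (Fin N) =>
            Γ q.1 t q.2 s)) →
        -- two-sided Gaussian bounds
        (∀ (x y : EuclideanSpace ℝ (Fin N)) (t s : ℝ), 0 ≤ s → s < t → t < T →
          (1 / C) * (t - s) ^ (-(N : ℝ) / 2) * Real.exp (-C * ‖x - y‖ ^ 2 / (t - s)) ≤
              Γ x t y s ∧
            Γ x t y s ≤
              C * (t - s) ^ (-(N : ℝ) / 2) * Real.exp (-(1 / C) * ‖x - y‖ ^ 2 / (t - s))) →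
        -- `u` is nonnegative and measurable on each time slice
        (∀ t : ℝ, 0 ≤ t → t < T → Measurable (fun x => u x t)) →
        (∀ (x : EuclideanSpace ℝ (Fin N)) (t : ℝ), 0 ≤ t → t < T → 0 ≤ u x t) →
        -- representation formula with finite integrals
        (∀ (x : EuclideanSpace ℝ (Fin N)) (τ t : ℝ), 0 ≤ τ → τ < t → t < T →
          Integrable (fun ξ => Γ x t ξ τ * u ξ τ) volume ∧
            u x t = ∫ ξ, Γ x t ξ τ * u ξ τ) →
        -- conclusion: sub-potential lower bound
        ∀ (x y : EuclideanSpace ℝ (Fin N)) (s t : ℝ), 0 < s → s < t → t < T →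
          u x t ≥ (1 / C') * u y s * (s / t) ^ ((N : ℝ) / 2) *
            Real.exp (-C' * ‖x - y‖ ^ 2 / (t - s)) := by
  have hC0 : (0:ℝ) < C := lt_of_lt_of_le one_pos hC
  set e : ℝ := (N : ℝ) / 2 with he
  have hepos : 0 < e := by
    have h1 : (1:ℝ) ≤ (N:ℝ) := by exact_mod_cast hN
    simp only [he]; linarith
  have hX1 : (1:ℝ) ≤ (4 * C ^ 2) ^ e :=
    Real.one_le_rpow (by nlinarith) hepos.le
  have hXpos : (0:ℝ) < (4 * C ^ 2) ^ e := lt_of_lt_of_le one_pos hX1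
  refine ⟨2 * C ^ 2 * (4 * C ^ 2) ^ e, by nlinarith, ?_⟩
  set C' : ℝ := 2 * C ^ 2 * (4 * C ^ 2) ^ e with hC'def
  set X : ℝ := (4 * C ^ 2) ^ e with hXdef
  have hC'pos : 0 < C' := by rw [hC'def]; positivity
  have hC'geC : 2 * C ≤ C' := by
    rw [hC'def]
    nlinarith [mul_nonneg (sq_nonneg C) (sub_nonneg.mpr hX1)]
  intro T hT Γ u hΓm hΓbd hum hupos hrep x y s t hs hst htT
  have htpos : 0 < t := hs.trans hst
  set δ : ℝ := min (s / 2) ((t - s) / (2 * C ^ 2)) with hδdef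
  have hts : 0 < t - s := by linarith
  have hδpos : 0 < δ := lt_min (by linarith) (by positivity)
  have hδs : δ ≤ s / 2 := min_le_left _ _
  have hδts : 2 * C ^ 2 * δ ≤ t - s := by
    have h := min_le_right (s / 2) ((t - s) / (2 * C ^ 2))
    rw [le_div_iff₀ (by positivity)] at h
    linear_combination h
  set τ : ℝ := s - δ with hτdef
  have hτ0 : 0 ≤ τ := by simp only [hτdef]; linarith
  have hτs : τ < s := by simp only [hτdef]; linarith
  have hτt : τ < t := hτs.trans hst
  have hsT : s < T := hst.trans htT
  have hbdef : s - τ = δ := by simp [hτdef]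
  have hbpos : 0 < s - τ := by linarith
  have hapos : 0 < t - τ := by linarith
  have hats : t - s ≤ t - τ := by linarith
  have hba : 2 * C ^ 2 * (s - τ) ≤ t - τ := by rw [hbdef]; linarith
  -- ratio bound : s / (4 C² t) ≤ (s-τ)/(t-τ)
  have hratio : s / (4 * C ^ 2 * t) ≤ (s - τ) / (t - τ) := by
    rw [hbdef, div_le_div_iff₀ (by positivity) hapos]
    have htτ : t - τ = t - s + δ := by rw [hτdef]; ring
    rw [htτ]
    rcases le_total (s / 2) ((t - s) / (2 * C ^ 2)) with h | h
    · have hδeq : δ = s / 2 := min_eq_left h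
      rw [hδeq]
      exact aux_ratio1 C s t hC hs hst
    · have hδeq : δ = (t - s) / (2 * C ^ 2) := min_eq_right h
      have hδval : 2 * C ^ 2 * δ = t - s := by
        rw [hδeq]; field_simp
      rw [show t - s + δ = 2 * C ^ 2 * δ + δ by rw [hδval]]
      exact aux_ratio2 C s t δ hC hs hst hδpos
  obtain ⟨hint_t, hrep_t⟩ := hrep x τ t hτ0 hτt htT
  obtain ⟨hint_s, hrep_s⟩ := hrep y τ s hτ0 hτs hsT
  set K : ℝ := 1 / C' * (s / t) ^ e * Real.exp (-C' * ‖x - y‖ ^ 2 / (t - s)) with hK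
  have hstpos : (0:ℝ) < (s / t) ^ e := Real.rpow_pos_of_pos (by positivity) e
  have hE1pos : (0:ℝ) < Real.exp (-C' * ‖x - y‖ ^ 2 / (t - s)) := Real.exp_pos _
  have hKpos : 0 < K := by rw [hK]; positivity
  -- power comparison
  have hApos : (0:ℝ) < (t - τ) ^ (-(N:ℝ) / 2) := Real.rpow_pos_of_pos hapos _
  have hBpos : (0:ℝ) < (s - τ) ^ (-(N:ℝ) / 2) := Real.rpow_pos_of_pos hbpos _
  have hpow : (s / t) ^ e * (s - τ) ^ (-(N:ℝ) / 2) ≤ (t - τ) ^ (-(N:ℝ) / 2) * X := by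
    have hsplit : (t - τ) ^ (-(N:ℝ) / 2) =
        ((s - τ) / (t - τ)) ^ e * (s - τ) ^ (-(N:ℝ) / 2) := by
      rw [Real.div_rpow hbpos.le hapos.le]
      rw [show -(N:ℝ)/2 = -e by rw [he]; ring]
      rw [Real.rpow_neg hbpos.le, Real.rpow_neg hapos.le]
      field_simp
    have h2 : (s / (4 * C ^ 2 * t)) ^ e ≤ ((s - τ) / (t - τ)) ^ e :=
      Real.rpow_le_rpow (by positivity) hratio hepos.le
    have h3 : (s / (4 * C ^ 2 * t)) ^ e = (s / t) ^ e * X⁻¹ := by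
      rw [show s / (4 * C ^ 2 * t) = s / t * (4 * C ^ 2)⁻¹ by
        field_simp]
      rw [Real.mul_rpow (by positivity) (by positivity),
        Real.inv_rpow (by positivity), hXdef]
    have h4 : (s / t) ^ e ≤ ((s - τ) / (t - τ)) ^ e * X := by
      have := mul_le_mul_of_nonneg_right h2 hXpos.le
      rw [h3] at this
      calc (s / t) ^ e = (s / t) ^ e * X⁻¹ * X := by
            field_simp
        _ ≤ ((s - τ) / (t - τ)) ^ e * X := this
    calc (s / t) ^ e * (s - τ) ^ (-(N:ℝ) / 2)
        ≤ ((s - τ) / (t - τ)) ^ e * X * (s - τ) ^ (-(N:ℝ) / 2) :=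
          mul_le_mul_of_nonneg_right h4 hBpos.le
      _ = (t - τ) ^ (-(N:ℝ) / 2) * X := by rw [hsplit]; ring
  -- pointwise kernel comparison
  have key : ∀ ξ : EuclideanSpace ℝ (Fin N), K * Γ y s ξ τ ≤ Γ x t ξ τ := by
    intro ξ
    obtain ⟨hlow, -⟩ := hΓbd x ξ t τ hτ0 hτt htT
    obtain ⟨hlow', hupp⟩ := hΓbd y ξ s τ hτ0 hτs hsT
    refine le_trans ?_ hlow
    have step1 : K * Γ y s ξ τ ≤
        K * (C * (s - τ) ^ (-(N:ℝ) / 2) * Real.exp (-(1 / C) * ‖y - ξ‖ ^ 2 / (s - τ))) :=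
      mul_le_mul_of_nonneg_left hupp hKpos.le
    refine step1.trans ?_
    set p := ‖x - ξ‖ ^ 2 with hp
    set q := ‖y - ξ‖ ^ 2 with hq
    set r := ‖x - y‖ ^ 2 with hr
    have hp0 : 0 ≤ p := by rw [hp]; positivity
    have hq0 : 0 ≤ q := by rw [hq]; positivity
    have hr0 : 0 ≤ r := by rw [hr]; positivity
    have hpqr : p ≤ 2 * r + 2 * q := by
      have h1 : ‖x - ξ‖ ≤ ‖x - y‖ + ‖y - ξ‖ := by
        have := norm_add_le (x - y) (y - ξ)
        simpa [sub_add_sub_cancel] using this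
      simp only [hp, hq, hr]
      exact aux_sq_triangle _ _ _ h1 (norm_nonneg _)
    -- exponential comparison
    have hexp : Real.exp (-C' * r / (t - s)) * Real.exp (-(1 / C) * q / (s - τ)) ≤
        Real.exp (-C * p / (t - τ)) := by
      rw [← Real.exp_add, Real.exp_le_exp]
      have h1 : C * p / (t - τ) ≤ 2 * C * r / (t - τ) + 2 * C * q / (t - τ) := by
        calc C * p / (t - τ) ≤ C * (2 * r + 2 * q) / (t - τ) := by gcongr
          _ = 2 * C * r / (t - τ) + 2 * C * q / (t - τ) := by ring
      have h2 : 2 * C * r / (t - τ) ≤ C' * r / (t - s) := by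
        apply div_le_div₀ (by positivity) _ hts hats
        exact mul_le_mul_of_nonneg_right hC'geC hr0
      have h3 : 2 * C * q / (t - τ) ≤ 1 / C * q / (s - τ) := by
        rw [div_le_div_iff₀ hapos hbpos]
        have h4 : q * (2 * C ^ 2 * (s - τ)) ≤ q * (t - τ) :=
          mul_le_mul_of_nonneg_left hba hq0
        have h5 := mul_le_mul_of_nonneg_left h4 (show (0:ℝ) ≤ 1 / C by positivity)
        calc 2 * C * q * (s - τ) = 1 / C * (q * (2 * C ^ 2 * (s - τ))) := by
              field_simp
          _ ≤ 1 / C * (q * (t - τ)) := h5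
          _ = 1 / C * q * (t - τ) := by ring
      have h5 : C * p / (t - τ) ≤ C' * r / (t - s) + 1 / C * q / (s - τ) := by linarith
      have h6 : -C' * r / (t - s) = -(C' * r / (t - s)) := by ring
      have h7 : -(1/C) * q / (s - τ) = -(1 / C * q / (s - τ)) := by ring
      have h8 : -C * p / (t - τ) = -(C * p / (t - τ)) := by ring
      rw [h6, h7, h8]
      linarith
    -- assemble
    set E1 := Real.exp (-C' * r / (t - s)) with hE1
    set E2 := Real.exp (-(1 / C) * q / (s - τ)) with hE2
    set E3 := Real.exp (-C * p / (t - τ)) with hE3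
    have hE1p : 0 < E1 := Real.exp_pos _
    have hE2p : 0 < E2 := Real.exp_pos _
    have hE3p : 0 < E3 := Real.exp_pos _
    have hF3 : (s / t) ^ e * (s - τ) ^ (-(N:ℝ) / 2) * (E1 * E2) ≤
        (t - τ) ^ (-(N:ℝ) / 2) * X * E3 :=
      mul_le_mul hpow hexp (by positivity) (by positivity)
    have hfinal : C / C' * ((t - τ) ^ (-(N:ℝ) / 2) * X * E3) ≤
        1 / C * (t - τ) ^ (-(N:ℝ) / 2) * E3 := by
      have hCC' : C / C' * X ≤ 1 / C := by
        have heq : C / C' * X = 1 / (2 * C) := by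
          rw [hC'def]; field_simp
        rw [heq]
        apply one_div_le_one_div_of_le hC0
        linarith
      calc C / C' * ((t - τ) ^ (-(N:ℝ) / 2) * X * E3)
          = (C / C' * X) * ((t - τ) ^ (-(N:ℝ) / 2) * E3) := by ring
        _ ≤ 1 / C * ((t - τ) ^ (-(N:ℝ) / 2) * E3) :=
            mul_le_mul_of_nonneg_right hCC' (by positivity)
        _ = 1 / C * (t - τ) ^ (-(N:ℝ) / 2) * E3 := by ring
    calc K * (C * (s - τ) ^ (-(N:ℝ) / 2) * E2)
        = C / C' * ((s / t) ^ e * (s - τ) ^ (-(N:ℝ) / 2) * (E1 * E2)) := by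
          rw [hK]; ring
      _ ≤ C / C' * ((t - τ) ^ (-(N:ℝ) / 2) * X * E3) :=
          mul_le_mul_of_nonneg_left hF3 (by positivity)
      _ ≤ 1 / C * (t - τ) ^ (-(N:ℝ) / 2) * E3 := hfinal
  -- integrate
  have hmono : ∫ ξ, K * (Γ y s ξ τ * u ξ τ) ≤ ∫ ξ, Γ x t ξ τ * u ξ τ := by
    apply integral_mono (hint_s.const_mul K) hint_t
    intro ξ
    have h0 : 0 ≤ u ξ τ := hupos ξ τ hτ0 (hτt.trans htT)
    calc K * (Γ y s ξ τ * u ξ τ) = (K * Γ y s ξ τ) * u ξ τ := by ring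
      _ ≤ Γ x t ξ τ * u ξ τ := mul_le_mul_of_nonneg_right (key ξ) h0
  rw [integral_const_mul, ← hrep_s, ← hrep_t] at hmono
  calc 1 / C' * u y s * (s / t) ^ e * Real.exp (-C' * ‖x - y‖ ^ 2 / (t - s))
      = K * u y s := by rw [hK]; ring
    _ ≤ u x t := hmono
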